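/- Let C ≤ Mat_{n×m}(F_q) be a rank-metric code of dimension k. For all integers 0 ≤ j ≤ n and 0 ≤ r ≤ k, the generalized binomial moments satisfy the MacWilliams-type identity B^(r)_C(j) = Σ_{ℓ=0}^{r} q^{ℓ(k − m(n−j) − r + ℓ)} [k − m(n−j) choose r−ℓ]_q · B^(ℓ)_{C^⊥}(n−j), where B^(r)_C(j) = Σ_{J ≤ F_q^n, dim J = j} [dim C(J) choose r]_q and C^⊥ is the trace dual code. -/

import Mathlib

set_option linter.unusedSectionVars false

open Finset Matrix

variable {F : Type} [Field F] [Fintype F]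

/-- The column space of a matrix: the span of its columns. -/
noncomputable def colspace {n m : ℕ} (M : Matrix (Fin n) (Fin m) F) :
    Submodule F (Fin n → F) :=
  Submodule.span F (Set.range Mᵀ)

lemma col_mem_colspace {n m : ℕ} (M : Matrix (Fin n) (Fin m) F) (j : Fin m) :
    Mᵀ j ∈ colspace M :=
  Submodule.subset_span ⟨j, rfl⟩

/-- `codeSub C J = C(J) = { M ∈ C : colspace M ≤ J }`, as a submodule. -/
noncomputable def codeSub {n m : ℕ} (C : Submodule F (Matrix (Fin n) (Fin m) F))
    (J : Submodule F (Fin n → F)) : Submodule F (Matrix (Fin n) (Fin m) F) where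
  carrier := {M | M ∈ C ∧ colspace M ≤ J}
  zero_mem' := ⟨C.zero_mem, by
    rw [colspace]
    refine Submodule.span_le.2 ?_
    rintro _ ⟨j, rfl⟩
    have h : (0 : Matrix (Fin n) (Fin m) F)ᵀ j = 0 := by
      funext i; simp
    rw [h]; exact J.zero_mem⟩
  add_mem' := by
    rintro A B ⟨hA, hA'⟩ ⟨hB, hB'⟩
    refine ⟨C.add_mem hA hB, ?_⟩
    rw [colspace]
    refine Submodule.span_le.2 ?_
    rintro _ ⟨j, rfl⟩
    have h : (A + B)ᵀ j = Aᵀ j + Bᵀ j := by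
      funext i; simp [Matrix.transpose_apply]
    rw [h]
    exact J.add_mem (hA' (col_mem_colspace A j)) (hB' (col_mem_colspace B j))
  smul_mem' := by
    rintro c A ⟨hA, hA'⟩
    refine ⟨C.smul_mem c hA, ?_⟩
    rw [colspace]
    refine Submodule.span_le.2 ?_
    rintro _ ⟨j, rfl⟩
    have h : (c • A)ᵀ j = c • (Aᵀ j) := by
      funext i; simp [Matrix.transpose_apply]
    rw [h]
    exact J.smul_mem c (hA' (col_mem_colspace A j))

/-- Higher rank-support of a subcode: the sum of the column spaces of its members. -/
noncomputable def Supp {n m : ℕ} (D : Submodule F (Matrix (Fin n) (Fin m) F)) :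
    Submodule F (Fin n → F) :=
  ⨆ M ∈ (D : Set (Matrix (Fin n) (Fin m) F)), colspace M

/-- The linear functional `x ↦ ∑ i, x i * y i` (standard inner product with `y`). -/
noncomputable def dotForm {n : ℕ} (y : Fin n → F) : (Fin n → F) →ₗ[F] F where
  toFun x := ∑ i, x i * y i
  map_add' a b := by simp [add_mul, Finset.sum_add_distrib]
  map_smul' c a := by simp [Finset.mul_sum, mul_assoc]

/-- Orthogonal complement w.r.t. the standard inner product on `F^n`. -/
noncomputable def perp {n : ℕ} (J : Submodule F (Fin n → F)) : Submodule F (Fin n → F) :=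
  ⨅ y ∈ (J : Set (Fin n → F)), LinearMap.ker (dotForm y)

/-- The linear functional `N ↦ Tr (M Nᵀ)`. -/
noncomputable def traceForm {n m : ℕ} (M : Matrix (Fin n) (Fin m) F) :
    Matrix (Fin n) (Fin m) F →ₗ[F] F where
  toFun N := Matrix.trace (M * Nᵀ)
  map_add' A B := by simp [Matrix.transpose_add, Matrix.mul_add]
  map_smul' c A := by simp [Matrix.transpose_smul, Matrix.mul_smul]

/-- The trace dual code. -/
noncomputable def dualCode {n m : ℕ} (C : Submodule F (Matrix (Fin n) (Fin m) F)) :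
    Submodule F (Matrix (Fin n) (Fin m) F) :=
  ⨅ M ∈ (C : Set (Matrix (Fin n) (Fin m) F)), LinearMap.ker (traceForm M)

/-- Gaussian binomial coefficient `[a choose r]_q` as a rational number. -/
noncomputable def gb (q : ℚ) (a r : ℕ) : ℚ :=
  ∏ i ∈ Finset.range r, (q ^ a - q ^ i) / (q ^ r - q ^ i)

/-- Gaussian binomial with integer upper argument:
`[a choose b]_q = ∏_{i=0}^{b-1} (q^{a-i}-1)/(q^{b-i}-1)`. -/
noncomputable def gbZ (q : ℚ) (a : ℤ) (b : ℕ) : ℚ :=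
  ∏ i ∈ Finset.range b, (q ^ (a - (i : ℤ)) - 1) / (q ^ ((b : ℤ) - (i : ℤ)) - 1)

/-- `B^(r)_C(j) = ∑_{dim J = j} [dim C(J) choose r]_q`. -/
noncomputable def Bcoef {n m : ℕ} (C : Submodule F (Matrix (Fin n) (Fin m) F))
    (r j : ℕ) : ℚ :=
  ∑ᶠ J ∈ {J : Submodule F (Fin n → F) | Module.finrank F J = j},
    gbZ (Fintype.card F) (Module.finrank F (codeSub C J)) r


/- ## Auxiliary: Gaussian binomial machinery -/

noncomputable def Pnum (q : ℚ) (a : ℤ) (b : ℕ) : ℚ :=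
  ∏ i ∈ Finset.range b, (q ^ (a - (i : ℤ)) - 1)

noncomputable def Dden (q : ℚ) (b : ℕ) : ℚ :=
  ∏ i ∈ Finset.range b, (q ^ ((i : ℤ) + 1) - 1)

@[simp] lemma gbZ_zero' (q : ℚ) (a : ℤ) : gbZ q a 0 = 1 := by simp [gbZ]

section gb
variable {q : ℚ} (hq : 1 < q)
include hq

lemma qz_ne (z : ℤ) (hz : z ≠ 0) : q ^ z - 1 ≠ 0 := by
  have := (zpow_right_strictMono₀ hq).injective.ne hz
  simpa [sub_eq_zero] using this

lemma q_ne_zero : q ≠ 0 := by positivity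

lemma Dden_ne_zero (b : ℕ) : Dden q b ≠ 0 := by
  refine Finset.prod_ne_zero_iff.2 fun i _ => qz_ne hq _ (by omega)

lemma Dden_eq (b : ℕ) : Dden q b = ∏ i ∈ Finset.range b, (q ^ ((b : ℤ) - i) - 1) := by
  rw [Dden, ← Finset.prod_range_reflect]
  refine Finset.prod_congr rfl fun j hj => ?_
  have hj' := Finset.mem_range.1 hj
  congr 2
  omega

lemma gbZ_eq_div (a : ℤ) (b : ℕ) : gbZ q a b = Pnum q a b / Dden q b := by
  rw [gbZ, Pnum, Dden_eq hq, ← Finset.prod_div_distrib]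

lemma Pnum_succ (a : ℤ) (b : ℕ) :
    Pnum q a (b + 1) = Pnum q a b * (q ^ (a - b) - 1) := Finset.prod_range_succ _ _

lemma Pnum_shift (a : ℤ) (b : ℕ) :
    Pnum q (a + 1) (b + 1) = (q ^ (a + 1) - 1) * Pnum q a b := by
  rw [Pnum, Finset.prod_range_succ', mul_comm]
  congr 1
  · norm_num
  · refine Finset.prod_congr rfl fun i _ => ?_
    congr 2
    push_cast
    ring

lemma Dden_succ (b : ℕ) : Dden q (b + 1) = Dden q b * (q ^ ((b : ℤ) + 1) - 1) :=
  Finset.prod_range_succ _ _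

lemma gbZ_succ_mul (a : ℤ) (b : ℕ) :
    gbZ q a (b + 1) * (q ^ ((b : ℤ) + 1) - 1) = gbZ q a b * (q ^ (a - b) - 1) := by
  rw [gbZ_eq_div hq, gbZ_eq_div hq, Pnum_succ hq, Dden_succ hq]
  have h1 := Dden_ne_zero hq b
  have h2 := qz_ne hq ((b : ℤ) + 1) (by omega)
  field_simp

lemma gbZ_shift_mul (a : ℤ) (b : ℕ) :
    gbZ q (a + 1) (b + 1) * (q ^ (a - b) - 1) = gbZ q a (b + 1) * (q ^ (a + 1) - 1) := by
  rw [gbZ_eq_div hq, gbZ_eq_div hq]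
  have key : Pnum q (a + 1) (b + 1) * (q ^ (a - b) - 1)
      = Pnum q a (b + 1) * (q ^ (a + 1) - 1) := by
    have e1 : Pnum q (a + 1) (b + 1 + 1) = Pnum q (a + 1) (b + 1) * (q ^ (a - b) - 1) := by
      rw [Pnum_succ hq]
      congr 3
      push_cast; ring
    have e2 : Pnum q (a + 1) (b + 1 + 1) = (q ^ (a + 1) - 1) * Pnum q a (b + 1) :=
      Pnum_shift hq a (b + 1)
    rw [← e1, e2]; ring
  have h1 := Dden_ne_zero hq (b + 1)
  field_simp
  linear_combination key

lemma gbZ_nat_self (b : ℕ) : gbZ q (b : ℤ) b = 1 := by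
  rw [gbZ_eq_div hq]
  have : Pnum q (b : ℤ) b = Dden q b := by
    rw [Dden_eq hq, Pnum]
  rw [this, div_self (Dden_ne_zero hq b)]

lemma gbZ_nat_zero (c b : ℕ) (h : c < b) : gbZ q (c : ℤ) b = 0 := by
  rw [gbZ_eq_div hq, Pnum]
  rw [Finset.prod_eq_zero (Finset.mem_range.2 h) (by simp), zero_div]

lemma gbZ_pascal2 (a : ℤ) (b : ℕ) :
    gbZ q (a + 1) (b + 1) = gbZ q a (b + 1) + q ^ (a - b) * gbZ q a b := by
  by_cases hab : a = (b : ℤ)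
  · subst hab
    have h0 : gbZ q ((b : ℤ) + 1) (b + 1) = 1 := by
      have := gbZ_nat_self hq (b + 1); push_cast at this; exact this
    have h1 : gbZ q (b : ℤ) (b + 1) = 0 := gbZ_nat_zero hq b (b + 1) (by omega)
    rw [h0, h1, gbZ_nat_self hq b]
    simp
  · have hd : q ^ (a - b) - 1 ≠ 0 := qz_ne hq _ (by omega)
    have h7 := gbZ_shift_mul hq a b
    have h6 := gbZ_succ_mul hq a b
    have haux : q ^ (a - b) * q ^ ((b : ℤ) + 1) = q ^ (a + 1) := by
      rw [← zpow_add₀ (q_ne_zero hq)]; congr 1; ring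
    refine mul_right_cancel₀ hd ?_
    linear_combination h7 + q ^ (a - (b:ℤ)) * h6 - gbZ q a (b + 1) * haux

lemma gbZ_pascal1 (a : ℤ) (b : ℕ) :
    gbZ q (a + 1) (b + 1) = q ^ ((b : ℤ) + 1) * gbZ q a (b + 1) + gbZ q a b := by
  rw [gbZ_pascal2 hq]
  linear_combination -gbZ_succ_mul hq a b

lemma gbZ_vandermonde (d : ℕ) (a : ℤ) (r : ℕ) :
    gbZ q (a + d) r = ∑ ℓ ∈ Finset.range (r + 1),
      q ^ ((ℓ : ℤ) * (a - r + ℓ)) * gbZ q a (r - ℓ) * gbZ q (d : ℤ) ℓ := by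
  induction d generalizing a with
  | zero =>
    rw [Finset.sum_eq_single 0]
    · simp
    · intro ℓ hl hne
      rw [show ((0:ℕ):ℤ) = ((0:ℕ):ℤ) from rfl, gbZ_nat_zero hq 0 ℓ (by omega)]
      ring
    · simp
  | succ d ih =>
    have step1 : a + ((d+1 : ℕ) : ℤ) = (a + 1) + (d : ℤ) := by push_cast; ring
    rw [step1, ih (a + 1)]
    have split_d : ∀ ℓ ∈ Finset.range (r + 1),
        gbZ q ((d+1 : ℕ) : ℤ) ℓ = q ^ (ℓ : ℤ) * gbZ q (d : ℤ) ℓ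
          + (if ℓ = 0 then 0 else gbZ q (d : ℤ) (ℓ - 1)) := by
      intro ℓ _
      cases ℓ with
      | zero => simp
      | succ s =>
        have := gbZ_pascal1 hq (d : ℤ) s
        push_cast
        push_cast at this
        simpa using this
    have split_a : ∀ ℓ ∈ Finset.range (r + 1),
        gbZ q (a + 1) (r - ℓ) = gbZ q a (r - ℓ)
          + (if ℓ = r then 0 else q ^ (a - r + ℓ + 1) * gbZ q a (r - ℓ - 1)) := by
      intro ℓ hl
      have hl' := Finset.mem_range.1 hl
      by_cases hlr : ℓ = r
      · subst hlr; simp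
      · obtain ⟨t, ht⟩ : ∃ t, r - ℓ = t + 1 := ⟨r - ℓ - 1, by omega⟩
        rw [if_neg hlr, ht, Nat.add_sub_cancel, gbZ_pascal2 hq a t]
        have he : a - (t : ℤ) = a - r + ℓ + 1 := by
          have h3 : (t : ℤ) = (r : ℤ) - ℓ - 1 := by omega
          rw [h3]; ring
        rw [he]
    calc (∑ ℓ ∈ Finset.range (r + 1),
          q ^ ((ℓ : ℤ) * (a + 1 - r + ℓ)) * gbZ q (a + 1) (r - ℓ) * gbZ q (d : ℤ) ℓ)
        = (∑ ℓ ∈ Finset.range (r + 1),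
            q ^ ((ℓ : ℤ) * (a - r + ℓ)) * gbZ q a (r - ℓ) * (q ^ (ℓ : ℤ) * gbZ q (d : ℤ) ℓ))
          + ∑ ℓ ∈ Finset.range (r + 1),
            q ^ ((ℓ : ℤ) * (a + 1 - r + ℓ)) *
              (if ℓ = r then 0 else q ^ (a - r + ℓ + 1) * gbZ q a (r - ℓ - 1)) *
              gbZ q (d : ℤ) ℓ := by
          rw [← Finset.sum_add_distrib]
          refine Finset.sum_congr rfl fun ℓ hl => ?_
          rw [split_a ℓ hl]
          have hz : q ^ ((ℓ : ℤ) * (a - r + ℓ)) * q ^ (ℓ : ℤ)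
              = q ^ ((ℓ : ℤ) * (a + 1 - r + ℓ)) := by
            rw [← zpow_add₀ (q_ne_zero hq)]; congr 1; ring
          linear_combination (-(gbZ q a (r - ℓ) * gbZ q (d:ℤ) ℓ)) * hz
      _ = ∑ ℓ ∈ Finset.range (r + 1),
            q ^ ((ℓ : ℤ) * (a - r + ℓ)) * gbZ q a (r - ℓ) * gbZ q ((d+1 : ℕ) : ℤ) ℓ := by
          rw [show (∑ ℓ ∈ Finset.range (r + 1),
              q ^ ((ℓ : ℤ) * (a - r + ℓ)) * gbZ q a (r - ℓ) * gbZ q ((d+1:ℕ) : ℤ) ℓ)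
            = ∑ ℓ ∈ Finset.range (r + 1),
              (q ^ ((ℓ : ℤ) * (a - r + ℓ)) * gbZ q a (r - ℓ) * (q ^ (ℓ:ℤ) * gbZ q (d:ℤ) ℓ)
               + q ^ ((ℓ : ℤ) * (a - r + ℓ)) * gbZ q a (r - ℓ) *
                  (if ℓ = 0 then 0 else gbZ q (d : ℤ) (ℓ - 1))) from
            Finset.sum_congr rfl fun ℓ hl => by rw [split_d ℓ hl]; ring]
          rw [Finset.sum_add_distrib]
          congr 1
          rw [Finset.sum_range_succ, Finset.sum_range_succ']
          simp only [reduceIte, mul_zero, zero_mul, add_zero, zero_add]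
          refine Finset.sum_congr rfl fun s hs => ?_
          have hs' := Finset.mem_range.1 hs
          rw [if_neg (by omega : ¬ s = r), if_neg (Nat.succ_ne_zero s)]
          have h1 : (s + 1) - 1 = s := rfl
          have h2 : r - (s + 1) = r - s - 1 := by omega
          rw [h1, h2]
          have hz : q ^ (((s+1 : ℕ) : ℤ) * (a - r + ((s+1:ℕ):ℤ)))
              = q ^ ((s : ℤ) * (a + 1 - r + s)) * q ^ (a - r + s + 1) := by
            rw [← zpow_add₀ (q_ne_zero hq)]; congr 1; push_cast; ring
          rw [hz]
          ring

end gb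

/- ## Auxiliary: bilinear forms -/

/-- standard dot-product bilinear form on `Fin n → F` -/
noncomputable def dotB (n : ℕ) : LinearMap.BilinForm F (Fin n → F) :=
  LinearMap.mk₂ F (fun x y => ∑ i, x i * y i)
    (fun a b y => by simp [add_mul, Finset.sum_add_distrib])
    (fun c a y => by simp [Finset.mul_sum, mul_assoc])
    (fun x a b => by simp [mul_add, Finset.sum_add_distrib])
    (fun c x a => by simp [Finset.mul_sum]; ring_nf; simp [mul_assoc, mul_comm, mul_left_comm])

lemma dotB_apply {n : ℕ} (x y : Fin n → F) : dotB n x y = ∑ i, x i * y i := rfl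

lemma dotB_refl {n : ℕ} : (dotB (F := F) n).IsRefl := by
  intro x y h
  simpa [dotB_apply, mul_comm] using h

lemma dotB_nondeg {n : ℕ} : (dotB (F := F) n).Nondegenerate := by
  refine (LinearMap.IsRefl.nondegenerate_iff_separatingLeft (B := dotB (F := F) n) dotB_refl).2 fun x hx => ?_
  funext i
  have := hx (Pi.single i 1)
  simpa [dotB_apply, Pi.single_apply, mul_comm] using this

/-- trace bilinear form on matrices -/
noncomputable def traceB (n m : ℕ) : LinearMap.BilinForm F (Matrix (Fin n) (Fin m) F) :=
  LinearMap.mk₂ F (fun M N => Matrix.trace (M * Nᵀ))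
    (fun A B y => by simp [Matrix.add_mul])
    (fun c A y => by simp [Matrix.smul_mul])
    (fun x A B => by simp [Matrix.transpose_add, Matrix.mul_add])
    (fun c x A => by simp [Matrix.transpose_smul, Matrix.mul_smul])

lemma traceB_apply {n m : ℕ} (M N : Matrix (Fin n) (Fin m) F) :
    traceB n m M N = ∑ i, ∑ l, M i l * N i l := by
  simp [traceB, Matrix.trace, Matrix.mul_apply, Matrix.diag]

lemma traceB_refl {n m : ℕ} : (traceB (F := F) n m).IsRefl := by
  intro x y h
  rw [traceB_apply] at *
  rw [← h]
  congr 1; funext i; congr 1; funext l; ring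

lemma traceB_nondeg {n m : ℕ} : (traceB (F := F) n m).Nondegenerate := by
  refine (LinearMap.IsRefl.nondegenerate_iff_separatingLeft (B := traceB (F := F) n m) traceB_refl).2 fun M hM => ?_
  funext i l
  have := hM (Matrix.single i l 1)
  rw [traceB_apply] at this
  simp only [Matrix.single, mul_ite, mul_one, mul_zero] at this
  rw [Finset.sum_comm] at this
  simpa [ite_and, Finset.sum_ite_eq'] using this

/- ## Auxiliary: linear algebra of codes -/

lemma colspace_le_iff {n m : ℕ} (M : Matrix (Fin n) (Fin m) F) (J : Submodule F (Fin n → F)) :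
    colspace M ≤ J ↔ ∀ l, Mᵀ l ∈ J := by
  constructor
  · intro h l; exact h (col_mem_colspace M l)
  · intro h; rw [colspace]
    exact Submodule.span_le.2 (by rintro _ ⟨l, rfl⟩; exact h l)

lemma mem_codeSub {n m : ℕ} {C : Submodule F (Matrix (Fin n) (Fin m) F)}
    {J : Submodule F (Fin n → F)} {M : Matrix (Fin n) (Fin m) F} :
    M ∈ codeSub C J ↔ M ∈ C ∧ colspace M ≤ J := Iff.rfl

lemma dotForm_eq {n : ℕ} (y x : Fin n → F) : dotForm y x = dotB n y x := by
  show (∑ i, x i * y i) = ∑ i, y i * x i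
  exact Finset.sum_congr rfl fun i _ => mul_comm _ _

lemma mem_perp {n : ℕ} {J : Submodule F (Fin n → F)} {x : Fin n → F} :
    x ∈ perp J ↔ ∀ y ∈ J, dotB n y x = 0 := by
  simp only [perp, Submodule.mem_iInf, LinearMap.mem_ker]
  exact forall₂_congr fun y hy => by rw [dotForm_eq]

lemma perp_eq {n : ℕ} (J : Submodule F (Fin n → F)) : perp J = (dotB n).orthogonal J := by
  ext x
  rw [mem_perp, LinearMap.BilinForm.mem_orthogonal_iff]

lemma mem_dualCode {n m : ℕ} {C : Submodule F (Matrix (Fin n) (Fin m) F)}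
    {N : Matrix (Fin n) (Fin m) F} :
    N ∈ dualCode C ↔ ∀ M ∈ C, traceB n m M N = 0 := by
  simp only [dualCode, Submodule.mem_iInf, LinearMap.mem_ker]
  rfl

lemma dualCode_eq {n m : ℕ} (C : Submodule F (Matrix (Fin n) (Fin m) F)) :
    dualCode C = (traceB n m).orthogonal C := by
  ext N
  rw [mem_dualCode, LinearMap.BilinForm.mem_orthogonal_iff]

lemma finrank_perp {n : ℕ} (J : Submodule F (Fin n → F)) :
    Module.finrank F (perp J) = n - Module.finrank F J := by
  rw [perp_eq, LinearMap.BilinForm.finrank_orthogonal dotB_nondeg,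
    Module.finrank_pi, Fintype.card_fin]

lemma perp_perp {n : ℕ} (J : Submodule F (Fin n → F)) : perp (perp J) = J := by
  rw [perp_eq, perp_eq, LinearMap.BilinForm.orthogonal_orthogonal dotB_nondeg dotB_refl]

noncomputable def codeSubTopEquiv {n m : ℕ} (J : Submodule F (Fin n → F)) :
    (codeSub (⊤ : Submodule F (Matrix (Fin n) (Fin m) F)) J) ≃ₗ[F] (Fin m → J) where
  toFun M l := ⟨(M : Matrix (Fin n) (Fin m) F)ᵀ l, (colspace_le_iff _ _).1 M.2.2 l⟩
  map_add' A B := by funext l; ext i; rfl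
  map_smul' c A := by funext l; ext i; rfl
  invFun f := ⟨Matrix.of (fun i l => (f l : Fin n → F) i), ⟨trivial, by
    rw [colspace_le_iff]
    intro l
    have : (Matrix.of (fun i l => (f l : Fin n → F) i))ᵀ l = (f l : Fin n → F) := rfl
    rw [this]
    exact (f l).2⟩⟩
  left_inv M := rfl
  right_inv f := rfl

lemma finrank_codeSub_top {n m : ℕ} (J : Submodule F (Fin n → F)) :
    Module.finrank F (codeSub (⊤ : Submodule F (Matrix (Fin n) (Fin m) F)) J)
      = m * Module.finrank F J := by
  rw [(codeSubTopEquiv J).finrank_eq, Module.finrank_pi_fintype,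
    Finset.sum_const, Finset.card_univ, Fintype.card_fin, smul_eq_mul]

lemma codeSub_eq_inf {n m : ℕ} (C : Submodule F (Matrix (Fin n) (Fin m) F))
    (J : Submodule F (Fin n → F)) :
    codeSub C J = C ⊓ codeSub ⊤ J := by
  ext M
  simp only [mem_codeSub, Submodule.mem_inf, Submodule.mem_top, true_and]

lemma orth_sup {V : Type} [AddCommGroup V] [Module F V] (B : LinearMap.BilinForm F V)
    (U W : Submodule F V) :
    B.orthogonal (U ⊔ W) = B.orthogonal U ⊓ B.orthogonal W := by
  ext x
  simp only [LinearMap.BilinForm.mem_orthogonal_iff, Submodule.mem_inf]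
  constructor
  · intro h
    exact ⟨fun u hu => h u (Submodule.mem_sup_left hu),
      fun w hw => h w (Submodule.mem_sup_right hw)⟩
  · rintro ⟨h1, h2⟩ y hy
    obtain ⟨u, hu, w, hw, rfl⟩ := Submodule.mem_sup.1 hy
    have e1 := h1 u hu
    have e2 := h2 w hw
    rw [map_add, LinearMap.add_apply, e1, e2, add_zero]

lemma traceB_orth_codeSubTop {n m : ℕ} (J : Submodule F (Fin n → F)) :
    (traceB n m (F := F)).orthogonal (codeSub ⊤ J) = codeSub ⊤ (perp J) := by
  ext N
  simp only [LinearMap.BilinForm.mem_orthogonal_iff, LinearMap.BilinForm.IsOrtho,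
    mem_codeSub, Submodule.mem_top, true_and]
  constructor
  · intro h
    rw [colspace_le_iff]
    intro l
    rw [mem_perp]
    intro y hy
    have hM : colspace (Matrix.of fun i l' => if l' = l then y i else 0) ≤ J := by
      refine (colspace_le_iff _ _).2 fun l' => ?_
      by_cases h' : l' = l
      · have : (Matrix.of fun i l'' => if l'' = l then y i else 0)ᵀ l' = y := by
          funext i; simp [h']
        rw [this]; exact hy
      · have : (Matrix.of fun i l'' => if l'' = l then y i else 0)ᵀ l' = 0 := by
          funext i; simp [h']
        rw [this]; exact J.zero_mem
    have hBN := h _ hM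
    rw [traceB_apply] at hBN
    rw [dotB_apply]
    simp only [Matrix.of_apply, ite_mul, zero_mul, Finset.sum_ite_eq', Finset.mem_univ,
      if_true] at hBN
    simpa using hBN
  · intro hle M hM
    rw [traceB_apply, Finset.sum_comm]
    refine Finset.sum_eq_zero fun l _ => ?_
    have h1 : Mᵀ l ∈ J := (colspace_le_iff _ _).1 hM l
    have h2 := (mem_perp).1 ((colspace_le_iff _ _).1 hle l) _ h1
    rw [dotB_apply] at h2
    exact h2

lemma dim_duality {n m : ℕ} (C : Submodule F (Matrix (Fin n) (Fin m) F))
    (J : Submodule F (Fin n → F)) :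
    Module.finrank F (codeSub C J) + n * m
      = Module.finrank F (codeSub (dualCode C) (perp J)) + Module.finrank F C
        + m * Module.finrank F J := by
  classical
  have hmat : Module.finrank F (Matrix (Fin n) (Fin m) F) = n * m := by
    rw [Module.finrank_matrix, Fintype.card_fin, Fintype.card_fin, Module.finrank_self, mul_one]
  have e1 : codeSub (dualCode C) (perp J) = (traceB n m).orthogonal (C ⊔ (codeSub (⊤ : Submodule F (Matrix (Fin n) (Fin m) F)) J)) := by
    rw [codeSub_eq_inf, dualCode_eq, ← traceB_orth_codeSubTop, ← orth_sup]
  have h1 : Module.finrank F (codeSub (dualCode C) (perp J))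
      = n * m - Module.finrank F (C ⊔ (codeSub (⊤ : Submodule F (Matrix (Fin n) (Fin m) F)) J) : Submodule F (Matrix (Fin n) (Fin m) F)) := by
    rw [e1, LinearMap.BilinForm.finrank_orthogonal traceB_nondeg, hmat]
  have h2 : Module.finrank F (C ⊔ (codeSub (⊤ : Submodule F (Matrix (Fin n) (Fin m) F)) J) : Submodule F (Matrix (Fin n) (Fin m) F))
        + Module.finrank F (codeSub C J)
      = Module.finrank F C + Module.finrank F (codeSub (⊤ : Submodule F (Matrix (Fin n) (Fin m) F)) J) := by
    rw [codeSub_eq_inf C J]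
    exact Submodule.finrank_sup_add_finrank_inf_eq C (codeSub ⊤ J)
  have h3 : Module.finrank F (C ⊔ (codeSub (⊤ : Submodule F (Matrix (Fin n) (Fin m) F)) J) : Submodule F (Matrix (Fin n) (Fin m) F)) ≤ n * m := by
    rw [← hmat]; exact Submodule.finrank_le _
  have hV : Module.finrank F (codeSub (⊤ : Submodule F (Matrix (Fin n) (Fin m) F)) J) = m * Module.finrank F J := finrank_codeSub_top J
  omega


/-- MacWilliams identity for the generalized binomial moments. -/
theorem macwilliams_binomial_moments (n m : ℕ)
    (C : Submodule F (Matrix (Fin n) (Fin m) F)) (k : ℕ)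
    (hk : Module.finrank F C = k) (j r : ℕ) (hj : j ≤ n) (hr : r ≤ k) :
    Bcoef C r j
      = ∑ ℓ ∈ Finset.range (r + 1),
          (Fintype.card F : ℚ) ^
              ((ℓ : ℤ) * ((k : ℤ) - (m : ℤ) * ((n : ℤ) - (j : ℤ)) - (r : ℤ) + (ℓ : ℤ))) *
            gbZ (Fintype.card F) ((k : ℤ) - (m : ℤ) * ((n : ℤ) - (j : ℤ))) (r - ℓ) *
            Bcoef (dualCode C) ℓ (n - j) := by
  classical
  haveI : Finite (Submodule F (Fin n → F)) :=
    Finite.of_injective (fun J : Submodule F (Fin n → F) => (J : Set (Fin n → F)))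
      SetLike.coe_injective
  have hq : (1 : ℚ) < (Fintype.card F : ℚ) := by exact_mod_cast Fintype.one_lt_card
  set q : ℚ := (Fintype.card F : ℚ) with hqdef
  set a : ℤ := (k : ℤ) - (m : ℤ) * ((n : ℤ) - (j : ℤ)) with hadef
  have hSfin : ∀ t : ℕ, ({J : Submodule F (Fin n → F) | Module.finrank F J = t}).Finite :=
    fun t => Set.toFinite _
  have key : ∀ J : Submodule F (Fin n → F), Module.finrank F J = j →
      gbZ q (Module.finrank F (codeSub C J)) r
        = ∑ ℓ ∈ Finset.range (r + 1),
            q ^ ((ℓ : ℤ) * (a - r + ℓ)) * gbZ q a (r - ℓ) *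
              gbZ q (Module.finrank F (codeSub (dualCode C) (perp J))) ℓ := by
    intro J hJ
    have hd := dim_duality C J
    rw [hJ, hk] at hd
    have hcast : ((Module.finrank F (codeSub C J) : ℤ))
        = a + (Module.finrank F (codeSub (dualCode C) (perp J)) : ℤ) := by
      have hj' : (j : ℤ) ≤ (n : ℤ) := by exact_mod_cast hj
      rw [hadef]
      have hd' : (Module.finrank F (codeSub C J) : ℤ) + (n : ℤ) * m
          = (Module.finrank F (codeSub (dualCode C) (perp J)) : ℤ) + (k : ℤ) + (m : ℤ) * j := by
        exact_mod_cast hd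
      linear_combination hd'
    rw [hcast, gbZ_vandermonde hq]
  have hrw : ∀ ℓ, Bcoef (dualCode C) ℓ (n - j)
      = ∑ K ∈ (hSfin (n - j)).toFinset,
          gbZ q (Module.finrank F (codeSub (dualCode C) K)) ℓ := by
    intro ℓ
    rw [Bcoef, finsum_mem_eq_finite_toFinset_sum _ (hSfin (n - j))]
  simp only [hrw]
  rw [Bcoef, finsum_mem_eq_finite_toFinset_sum _ (hSfin j)]
  calc (∑ J ∈ (hSfin j).toFinset, gbZ q (Module.finrank F (codeSub C J)) r)
      = ∑ J ∈ (hSfin j).toFinset, ∑ ℓ ∈ Finset.range (r + 1),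
          q ^ ((ℓ : ℤ) * (a - r + ℓ)) * gbZ q a (r - ℓ) *
            gbZ q (Module.finrank F (codeSub (dualCode C) (perp J))) ℓ :=
        Finset.sum_congr rfl fun J hJ => key J (by
          simpa using (hSfin j).mem_toFinset.1 hJ)
    _ = ∑ ℓ ∈ Finset.range (r + 1), ∑ J ∈ (hSfin j).toFinset,
          q ^ ((ℓ : ℤ) * (a - r + ℓ)) * gbZ q a (r - ℓ) *
            gbZ q (Module.finrank F (codeSub (dualCode C) (perp J))) ℓ :=
        Finset.sum_comm
    _ = ∑ ℓ ∈ Finset.range (r + 1),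
          q ^ ((ℓ : ℤ) * (a - r + ℓ)) * gbZ q a (r - ℓ) *
            (∑ K ∈ (hSfin (n - j)).toFinset,
              gbZ q (Module.finrank F (codeSub (dualCode C) K)) ℓ) := by
        refine Finset.sum_congr rfl fun ℓ _ => ?_
        rw [Finset.mul_sum]
        refine Finset.sum_nbij' perp perp ?_ ?_ ?_ ?_ ?_
        · intro J hJ
          rw [Set.Finite.mem_toFinset] at *
          have : Module.finrank F J = j := hJ
          simp only [Set.mem_setOf_eq, finrank_perp, this]
        · intro K hK
          rw [Set.Finite.mem_toFinset] at *
          have : Module.finrank F K = n - j := hK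
          simp only [Set.mem_setOf_eq, finrank_perp, this]
          omega
        · intro J _; exact perp_perp J
        · intro K _; exact perp_perp K
        · intro J _; rfl
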